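/- Complementary slackness for the upper-value SDP: assume P* is a symmetric n×n matrix with 𝓡(P*) = 0, and set K* = −R⁻¹BᵀP*, L* = γ⁻²B_wᵀP*, Q* = Q + (K*)ᵀRK*. Then for every symmetric n×n matrix Z₁₁, the matrix Z* = [I; L*] Z₁₁ [I; L*]ᵀ (an (n+p)×(n+p) matrix) satisfies Tr( Z* · M ) = 0, where M is the block matrix [(A+BK*)ᵀP* + P*(A+BK*) + Q*, P*B_w; B_wᵀP*, −γ²I]. -/

import Mathlib

open Matrix

set_option maxHeartbeats 1000000

/-- Complementary slackness for the upper-value SDP. -/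
theorem upper_value_complementary_slackness {n m p : ℕ}
    (A : Matrix (Fin n) (Fin n) ℝ) (B : Matrix (Fin n) (Fin m) ℝ)
    (Bw : Matrix (Fin n) (Fin p) ℝ)
    (Q : Matrix (Fin n) (Fin n) ℝ) (hQ : Q.IsSymm)
    (R : Matrix (Fin m) (Fin m) ℝ) (hR : R.PosDef) (hRsymm : R.IsSymm)
    (γ : ℝ) (hγ : 0 < γ)
    (Ps : Matrix (Fin n) (Fin n) ℝ) (hPs : Ps.IsSymm)
    (hARE : Aᵀ * Ps + Ps * A + Q - Ps * B * R⁻¹ * Bᵀ * Ps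
      + (γ ^ 2)⁻¹ • (Ps * Bw * Bwᵀ * Ps) = 0)
    (Z₁₁ : Matrix (Fin n) (Fin n) ℝ) (hZ₁₁ : Z₁₁.IsSymm) :
    (let Ks := -(R⁻¹ * Bᵀ * Ps)
     let Ls := (γ ^ 2)⁻¹ • (Bwᵀ * Ps)
     let Qs := Q + Ksᵀ * R * Ks
     let S : Matrix (Fin n ⊕ Fin p) (Fin n) ℝ :=
       fromRows (1 : Matrix (Fin n) (Fin n) ℝ) Ls
     let Zs := S * Z₁₁ * Sᵀ
     let M : Matrix (Fin n ⊕ Fin p) (Fin n ⊕ Fin p) ℝ :=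
       fromBlocks ((A + B * Ks)ᵀ * Ps + Ps * (A + B * Ks) + Qs) (Ps * Bw)
         (Bwᵀ * Ps) (-(γ ^ 2 • (1 : Matrix (Fin p) (Fin p) ℝ)))
     (Zs * M).trace = 0) := by
  intro Ks Ls Qs S Zs M
  have hPt : Psᵀ = Ps := hPs
  have hRinv : R⁻¹ᵀ = R⁻¹ := by rw [Matrix.transpose_nonsing_inv, hRsymm.eq]
  have hRu : IsUnit R.det := isUnit_iff_ne_zero.mpr hR.det_pos.ne'
  have hγ2 : (γ ^ 2 : ℝ) ≠ 0 := by positivity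
  -- key: Sᵀ * M * S = 0
  have key : Sᵀ * M * S = 0 := by
    have hS : Sᵀ = fromCols (1 : Matrix (Fin n) (Fin n) ℝ)ᵀ Lsᵀ :=
      transpose_fromRows _ _
    rw [hS, Matrix.mul_assoc, fromBlocks_mul_fromRows, fromCols_mul_fromRows, ← hARE]
    simp only [Ks, Ls, Qs, transpose_one, Matrix.one_mul, Matrix.mul_one,
      Matrix.transpose_smul, Matrix.transpose_mul, Matrix.transpose_neg,
      Matrix.transpose_add, Matrix.transpose_transpose, hPt, hRinv,
      Matrix.mul_smul, Matrix.smul_mul, Matrix.neg_mul, Matrix.mul_neg,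
      Matrix.add_mul, Matrix.mul_add, smul_smul, smul_neg, neg_neg,
      inv_mul_cancel₀ hγ2, one_smul, Matrix.mul_assoc,
      Matrix.nonsing_inv_mul_cancel_left _ _ hRu, sub_eq_add_neg]
    abel
  calc (Zs * M).trace = (Z₁₁ * (Sᵀ * M * S)).trace := by
        show (S * Z₁₁ * Sᵀ * M).trace = _
        rw [Matrix.mul_assoc, Matrix.mul_assoc, trace_mul_comm, Matrix.mul_assoc,
          Matrix.mul_assoc]
    _ = 0 := by rw [key, Matrix.mul_zero, trace_zero]
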